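/- Let A be a complex Banach *-algebra with identity, and let a ∈ A be generalized Drazin invertible with g-Drazin inverse a^d. If x ∈ A satisfies x = a x², (ax)* = ax, and lim_{n→∞} ‖aⁿ - x a^{n+1}‖^{1/n} = 0 (i.e., x is a generalized core-EP inverse of a), then x a² a^d = a a^d, hence (xa - 1) a^d = 0. -/

import Mathlib

open Filter Topology

variable {A : Type*} [NormedRing A] [StarRing A] [NormedAlgebra ℂ A] [StarModule ℂ A]
  [CompleteSpace A]

/-- quasinilpotent: `lim ‖z^n‖^(1/n) = 0` -/
def IsQNil (z : A) : Prop :=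
  Tendsto (fun n : ℕ => ‖z ^ n‖ ^ ((1 : ℝ) / n)) atTop (𝓝 0)

/-- generalized Drazin inverse -/
def IsGD (a x : A) : Prop :=
  a * x ^ 2 = x ∧ a * x = x * a ∧ IsQNil (a - a ^ 2 * x)

/-- generalized core-EP inverse -/
def IsGCEP (a x : A) : Prop :=
  x = a * x ^ 2 ∧ star (a * x) = a * x ∧
    Tendsto (fun n : ℕ => ‖a ^ n - x * a ^ (n + 1)‖ ^ ((1 : ℝ) / n)) atTop (𝓝 0)

theorem stmt0 (a ad x : A) (had : IsGD a ad) (hx : IsGCEP a x) :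
    x * a ^ 2 * ad = a * ad ∧ (x * a - 1) * ad = 0 := by
  obtain ⟨had1, had2, -⟩ := had
  obtain ⟨-, -, hx3⟩ := hx
  -- key: a^(n+1) * ad^(n+1) = a * ad
  have L : ∀ n : ℕ, a ^ (n + 1) * ad ^ (n + 1) = a * ad := by
    intro n
    induction n with
    | zero => simp
    | succ n ih =>
      have e : a ^ (n + 1 + 1) * ad ^ (n + 1 + 1)
          = a * ((a ^ (n + 1) * ad ^ (n + 1)) * ad) := by
        rw [pow_succ' a, pow_succ ad]; noncomm_ring
      rw [e, ih, mul_assoc a ad ad, ← pow_two, had1]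
  have h2 : a ^ 2 * ad ^ 2 = a * ad := L 1
  have hc : ∀ n : ℕ, a * ad - x * a ^ 2 * ad
      = (a ^ (n + 1) - x * a ^ (n + 1 + 1)) * ad ^ (n + 1) := by
    intro n
    have h1 : a ^ (n + 2) * ad ^ (n + 1) = a ^ 2 * ad := by
      have e : a ^ (n + 2) * ad ^ (n + 1) = a * (a ^ (n + 1) * ad ^ (n + 1)) := by
        rw [pow_succ' a (n + 1)]; noncomm_ring
      rw [e, L n, ← mul_assoc, ← pow_two]
    calc a * ad - x * a ^ 2 * ad
        = a ^ (n + 1) * ad ^ (n + 1) - x * (a ^ (n + 2) * ad ^ (n + 1)) := by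
          rw [L n, h1, mul_assoc]
      _ = (a ^ (n + 1) - x * a ^ (n + 1 + 1)) * ad ^ (n + 1) := by noncomm_ring
  set c := a * ad - x * a ^ 2 * ad with hcdef
  have hnorm : ∀ n : ℕ, ‖c‖ ≤ ‖a ^ (n + 1) - x * a ^ (n + 1 + 1)‖ * ‖ad‖ ^ (n + 1) := by
    intro n
    calc ‖c‖ = ‖(a ^ (n + 1) - x * a ^ (n + 1 + 1)) * ad ^ (n + 1)‖ := congrArg norm (hc n)
      _ ≤ ‖a ^ (n + 1) - x * a ^ (n + 1 + 1)‖ * ‖ad ^ (n + 1)‖ := norm_mul_le _ _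
      _ ≤ _ := by gcongr ?_ * ?_
                  exact norm_pow_le' ad (Nat.succ_pos n)
  -- analytic part
  have hg : Tendsto (fun n : ℕ => ‖a ^ n - x * a ^ (n + 1)‖ ^ ((1 : ℝ) / n) * ‖ad‖)
      atTop (𝓝 0) := by simpa using hx3.mul_const ‖ad‖
  have hev : ∀ᶠ n : ℕ in atTop,
      ‖a ^ n - x * a ^ (n + 1)‖ ^ ((1 : ℝ) / n) * ‖ad‖ ≤ 1 / 2 :=
    hg.eventually_le_const (by norm_num)
  have hbound : ∀ᶠ n : ℕ in atTop, ‖c‖ ≤ (1 / 2 : ℝ) ^ n := by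
    filter_upwards [hev, eventually_ge_atTop 1] with n hn hn1
    obtain ⟨m, rfl⟩ := Nat.exists_eq_add_of_le hn1
    set b := a ^ (1 + m) - x * a ^ (1 + m + 1) with hb
    have hbn : ‖b‖ = (‖b‖ ^ ((1 : ℝ) / (1 + m : ℕ))) ^ (1 + m) := by
      rw [one_div, Real.rpow_inv_natCast_pow (norm_nonneg _) (by omega)]
    have hgnn : 0 ≤ ‖b‖ ^ ((1 : ℝ) / (1 + m : ℕ)) * ‖ad‖ :=
      mul_nonneg (Real.rpow_nonneg (norm_nonneg _) _) (norm_nonneg _)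
    calc ‖c‖ ≤ ‖b‖ * ‖ad‖ ^ (1 + m) := by
          have := hnorm m
          simpa [hb, add_comm 1 m] using this
      _ = (‖b‖ ^ ((1 : ℝ) / (1 + m : ℕ)) * ‖ad‖) ^ (1 + m) := by
          rw [mul_pow, ← hbn]
      _ ≤ (1 / 2 : ℝ) ^ (1 + m) := pow_le_pow_left₀ hgnn hn _
  have hlim : Tendsto (fun n : ℕ => (1 / 2 : ℝ) ^ n) atTop (𝓝 0) := by
    apply tendsto_pow_atTop_nhds_zero_of_lt_one <;> norm_num
  have hc0 : ‖c‖ ≤ 0 := ge_of_tendsto hlim hbound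
  have hceq : c = 0 := norm_le_zero_iff.mp hc0
  have h1 : x * a ^ 2 * ad = a * ad := by
    have := sub_eq_zero.mp hceq
    exact this.symm
  refine ⟨h1, ?_⟩
  have h3 : x * a * ad = ad := by
    have := congrArg (· * ad) h1
    simp only [mul_assoc] at this
    have e1 : x * a ^ 2 * ad * ad = x * (a ^ 2 * ad ^ 2) := by noncomm_ring
    have e2 : a * ad * ad = a * ad ^ 2 := by noncomm_ring
    calc x * a * ad = x * (a * ad) := by rw [mul_assoc]
      _ = x * (a ^ 2 * ad ^ 2) := by rw [h2]
      _ = x * a ^ 2 * ad * ad := by rw [e1]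
      _ = a * ad * ad := by rw [h1]
      _ = ad := by rw [e2, had1]
  calc (x * a - 1) * ad = x * a * ad - ad := by noncomm_ring
    _ = 0 := by rw [h3, sub_self]
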